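/- Every extreme point (x, y) of the convex hull conv(X) of the feasible set of problem P belongs to X (so y ∈ {0,1}^n), and for each j ∈ {1,…,m} there is at most one index i ∈ {1,…,n} with ℓ_{ij} y_i < x_{ij} < c_{ij} y_i. -/

import Mathlib

/-- Every extreme point of the convex hull of the feasible set `X` of
problem P belongs to `X`, and for each constraint `j` there is at most one index `i`
with `ℓ_{ij} y_i < x_{ij} < c_{ij} y_i`. -/
theorem stmt1
    (n m : ℕ) (hn : 0 < n) (hm : 0 < m)
    (v l c : Fin n → Fin m → ℕ) (d : Fin m → ℕ) (f : Fin n → ℕ)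
    (hlc : ∀ i j, l i j ≤ c i j) (hcd : ∀ i j, c i j ≤ d j)
    (X : Set ((Fin n → Fin m → ℝ) × (Fin n → ℝ)))
    (hX : X = {p | (∀ i, p.2 i = 0 ∨ p.2 i = 1) ∧
                   (∀ j, (d j : ℝ) ≤ ∑ i, p.1 i j) ∧
                   (∀ i j, (l i j : ℝ) * p.2 i ≤ p.1 i j ∧ p.1 i j ≤ (c i j : ℝ) * p.2 i)}) :
    ∀ p ∈ Set.extremePoints ℝ (convexHull ℝ X),
      p ∈ X ∧ ∀ j : Fin m,
        {i : Fin n | (l i j : ℝ) * p.2 i < p.1 i j ∧ p.1 i j < (c i j : ℝ) * p.2 i}.Subsingleton := by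
  intro p hp
  have hpX : p ∈ X := extremePoints_convexHull_subset hp
  refine ⟨hpX, ?_⟩
  intro j i1 hi1 i2 hi2
  by_contra hne
  simp only [Set.mem_setOf_eq] at hi1 hi2
  -- slack
  set ε : ℝ := min (min ((c i1 j : ℝ) * p.2 i1 - p.1 i1 j) (p.1 i1 j - (l i1 j : ℝ) * p.2 i1))
      (min ((c i2 j : ℝ) * p.2 i2 - p.1 i2 j) (p.1 i2 j - (l i2 j : ℝ) * p.2 i2)) with hεdef
  have hε : 0 < ε := by
    apply lt_min <;> apply lt_min <;> linarith [hi1.1, hi1.2, hi2.1, hi2.2]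
  have hε1 : ε ≤ (c i1 j : ℝ) * p.2 i1 - p.1 i1 j :=
    (min_le_left _ _).trans (min_le_left _ _)
  have hε2 : ε ≤ p.1 i1 j - (l i1 j : ℝ) * p.2 i1 :=
    (min_le_left _ _).trans (min_le_right _ _)
  have hε3 : ε ≤ (c i2 j : ℝ) * p.2 i2 - p.1 i2 j :=
    (min_le_right _ _).trans (min_le_left _ _)
  have hε4 : ε ≤ p.1 i2 j - (l i2 j : ℝ) * p.2 i2 :=
    (min_le_right _ _).trans (min_le_right _ _)
  -- perturbation
  set δ : Fin n → ℝ := fun i => (if i = i1 then ε else 0) - (if i = i2 then ε else 0) with hδdef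
  have hδsum : ∑ i, δ i = 0 := by
    simp [hδdef, Finset.sum_sub_distrib]
  have hδi1 : δ i1 = ε := by simp [hδdef, hne]
  have hδi2 : δ i2 = -ε := by simp [hδdef, Ne.symm hne]
  have hδother : ∀ i, i ≠ i1 → i ≠ i2 → δ i = 0 := by
    intro i h1 h2; simp [hδdef, h1, h2]
  set q1 : (Fin n → Fin m → ℝ) × (Fin n → ℝ) :=
    (fun i' j' => p.1 i' j' + (if j' = j then δ i' else 0), p.2) with hq1
  set q2 : (Fin n → Fin m → ℝ) × (Fin n → ℝ) :=
    (fun i' j' => p.1 i' j' - (if j' = j then δ i' else 0), p.2) with hq2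
  obtain ⟨hbin, hsum, hbounds⟩ := hX ▸ hpX
  have key : ∀ s : ℝ, s = 1 ∨ s = -1 →
      (fun i' j' => p.1 i' j' + s * (if j' = j then δ i' else 0), p.2) ∈ X := by
    intro s hs
    rw [hX]
    refine ⟨hbin, ?_, ?_⟩
    · intro j'
      by_cases hj : j' = j
      · subst hj
        simp only [if_pos rfl, if_true]
        have : ∑ i, (p.1 i j' + s * δ i) = ∑ i, p.1 i j' + s * ∑ i, δ i := by
          rw [Finset.sum_add_distrib, Finset.mul_sum]
        rw [this, hδsum]
        simpa using hsum j'
      · simp only [if_neg hj]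
        simpa using hsum j'
    · intro i j'
      by_cases hj : j' = j
      · subst hj
        simp only [if_pos rfl, if_true]
        by_cases h1 : i = i1
        · subst h1
          rw [hδi1]
          rcases hs with h | h <;> rw [h] <;>
            constructor <;> linarith [(hbounds i j').1, (hbounds i j').2]
        · by_cases h2 : i = i2
          · subst h2
            rw [hδi2]
            rcases hs with h | h <;> rw [h] <;>
              constructor <;> linarith [(hbounds i j').1, (hbounds i j').2]
          · rw [hδother i h1 h2]
            simpa using hbounds i j'
      · simp only [if_neg hj]
        simpa using hbounds i j'
  have hq1X : q1 ∈ X := by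
    have := key 1 (Or.inl rfl)
    simpa [hq1] using this
  have hq2X : q2 ∈ X := by
    have := key (-1) (Or.inr rfl)
    have h2 : (fun i' j' => p.1 i' j' + (-1 : ℝ) * (if j' = j then δ i' else 0), p.2) = q2 := by
      rw [hq2]
      ext i' j' <;> ring_nf <;> simp [sub_eq_add_neg]
    rwa [h2] at this
  have hmem : p ∈ openSegment ℝ q1 q2 := by
    refine ⟨1/2, 1/2, by norm_num, by norm_num, by norm_num, ?_⟩
    rw [hq1, hq2]
    refine Prod.ext ?_ ?_
    · funext i' j'
      simp only [Prod.fst, Prod.smul_mk, Prod.mk_add_mk, Pi.add_apply, Pi.smul_apply,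
        smul_eq_mul]
      ring
    · funext i'
      simp only [Prod.snd, Prod.smul_mk, Prod.mk_add_mk, Pi.add_apply, Pi.smul_apply,
        smul_eq_mul]
      ring
  have hq1c : q1 ∈ convexHull ℝ X := subset_convexHull ℝ X hq1X
  have hq2c : q2 ∈ convexHull ℝ X := subset_convexHull ℝ X hq2X
  have := (hp.2 hq1c hq2c hmem)
  have : q1.1 i1 j = p.1 i1 j := by rw [this]
  rw [hq1] at this
  simp only [if_pos rfl, if_true, hδi1] at this
  linarith
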